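/- If m is odd, then H_{q,m} is never a nontrivial difference set in F_q. -/

import Mathlib

open Finset

/-- `D` is a `(q, k, l)`-difference set in the additive group `F` (with `q = |F|`). -/
def IsDiffSet {F : Type*} [AddGroup F] (D : Set F) (k l : ℕ) : Prop :=
  D.ncard = k ∧
    ∀ a : F, a ≠ 0 → {x : F × F | x.1 ∈ D ∧ x.2 ∈ D ∧ x.1 - x.2 = a}.ncard = l

/-- `D` is a nontrivial difference set: a `(q, k, l)`-difference set of order `k - l > 1`. -/
def IsNontrivialDiffSet {F : Type*} [AddGroup F] (D : Set F) : Prop :=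
  ∃ k l : ℕ, IsDiffSet D k l ∧ 1 < k - l

/-- The set of nonzero `m`-th powers in `F`. -/
def Hset (F : Type*) [Field F] (m : ℕ) : Set F :=
  {x : F | x ≠ 0 ∧ ∃ y : F, y ^ m = x}

private lemma ncard_setOf_eq {α : Type*} [Fintype α] (p : α → Prop) [DecidablePred p] :
    {x | p x}.ncard = (Finset.univ.filter p).card := by
  rw [Set.ncard_eq_toFinset_card', Set.toFinset_setOf]

private lemma card_parity {α : Type*} [DecidableEq α] (s : Finset α) (g : α → α)
    (hmem : ∀ x ∈ s, g x ∈ s) (hinv : ∀ x ∈ s, g (g x) = x) :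
    (s.card : ZMod 2) = ((s.filter fun x => g x = x).card : ZMod 2) := by
  classical
  have hsplit := Finset.card_filter_add_card_filter_not
    (s := s) (p := fun x => g x = x)
  have h0 : (((s.filter fun x => ¬ g x = x).card : ZMod 2)) = 0 := by
    rw [Finset.card_eq_sum_ones]
    push_cast
    refine Finset.sum_involution (fun a _ => g a) (fun a ha => ?_) (fun a ha _ => ?_)
      (fun a ha => ?_) (fun a ha => ?_)
    · decide
    · exact (Finset.mem_filter.mp ha).2
    · rcases Finset.mem_filter.mp ha with ⟨hs, hne⟩
      refine Finset.mem_filter.mpr ⟨hmem a hs, ?_⟩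
      rw [hinv a hs]
      exact fun h => hne h.symm
    · exact hinv a (Finset.mem_filter.mp ha).1
  have hadd : ((s.filter fun x => g x = x).card : ZMod 2)
      + ((s.filter fun x => ¬ g x = x).card : ZMod 2) = (s.card : ZMod 2) := by
    rw [← Nat.cast_add, hsplit]
  rw [← hadd, h0, add_zero]

private lemma hset_ncard (F : Type*) [Field F] [Fintype F] (m f : ℕ) (hm : 0 < m)
    (hcard : Fintype.card F = m * f + 1) : (Hset F m).ncard = f := by
  classical
  obtain ⟨g, hg⟩ := IsCyclic.exists_generator (α := Fˣ)
  have horder : orderOf g = m * f := by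
    rw [orderOf_eq_card_of_forall_mem_zpowers hg, Nat.card_eq_fintype_card,
      Fintype.card_units, hcard]
    simp
  have hEq : Hset F m = Units.val '' ((Subgroup.zpowers (g ^ m)) : Set Fˣ) := by
    ext x
    constructor
    · rintro ⟨hx0, y, rfl⟩
      have hy0 : y ≠ 0 := by
        rintro rfl
        exact hx0 (zero_pow hm.ne')
      obtain ⟨i, hi⟩ := hg (Units.mk0 y hy0)
      refine ⟨(g ^ m) ^ i, Subgroup.mem_zpowers_iff.mpr ⟨i, rfl⟩, ?_⟩
      have h1 : (g ^ m) ^ i = (Units.mk0 y hy0) ^ m := by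
        rw [← hi, ← zpow_natCast g m, ← zpow_mul, mul_comm, zpow_mul, zpow_natCast]
      rw [h1]
      simp
    · rintro ⟨u, hu, rfl⟩
      obtain ⟨i, rfl⟩ := Subgroup.mem_zpowers_iff.mp hu
      refine ⟨Units.ne_zero _, ((g ^ i : Fˣ) : F), ?_⟩
      have h1 : ((g ^ i) : Fˣ) ^ m = (g ^ m) ^ i := by
        rw [← zpow_natCast (g ^ i) m, ← zpow_mul, mul_comm, zpow_mul, zpow_natCast]
      rw [← Units.val_pow_eq_pow_val, h1]
  rw [hEq, Set.ncard_image_of_injective _ Units.val_injective, ← Nat.card_coe_set_eq]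
  rw [SetLike.coe_sort_coe, Nat.card_zpowers, orderOf_pow, horder]
  rw [show Nat.gcd (m * f) m = m by simpa using Nat.gcd_mul_left m f 1]
  exact Nat.mul_div_cancel_left f hm

private noncomputable def chi {F : Type*} [Field F] (ε : F →+ ZMod 2) (z : F) : ℤ :=
  if ε z = 0 then 1 else -1

private lemma chi_zero {F : Type*} [Field F] (ε : F →+ ZMod 2) : chi ε 0 = 1 := by
  simp [chi]

private lemma chi_add {F : Type*} [Field F] (ε : F →+ ZMod 2) (a b : F) :
    chi ε (a + b) = chi ε a * chi ε b := by
  have hvals : ∀ x : ZMod 2, x = 0 ∨ x = 1 := by decide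
  have hab : ε (a + b) = ε a + ε b := map_add ε a b
  rcases hvals (ε a) with h1 | h1 <;> rcases hvals (ε b) with h2 | h2 <;>
    simp [chi, hab, h1, h2, show (1 + 1 : ZMod 2) = 0 from rfl]

private lemma chi_neg_one {F : Type*} [Field F] (ε : F →+ ZMod 2) (w : F) (hw : ε w = 1) :
    chi ε w = -1 := by
  simp [chi, hw]

private lemma chi_sum_zero {F : Type*} [Field F] [Fintype F] (ε : F →+ ZMod 2)
    (w : F) (hw : ε w = 1) (c : F) (hc : c ≠ 0) : ∑ z : F, chi ε (c * z) = 0 := by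
  have key : ∑ z : F, chi ε (c * z + w) = ∑ z : F, chi ε (c * z) := by
    refine Fintype.sum_bijective (fun z => z + c⁻¹ * w) (Equiv.addRight (c⁻¹ * w)).bijective
      _ _ (fun z => ?_)
    rw [mul_add, mul_inv_cancel_left₀ hc]
  have key2 : ∀ z : F, chi ε (c * z + w) = - chi ε (c * z) := by
    intro z
    rw [chi_add, chi_neg_one ε w hw, mul_neg_one]
  simp only [key2, Finset.sum_neg_distrib] at key
  linarith [key]

theorem stmt6 (m f : ℕ) (hm : 0 < m) (hf : 0 < f) (hodd : Odd m)
    (F : Type*) [Field F] [Fintype F]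
    (hq : ∃ p n : ℕ, p.Prime ∧ 0 < n ∧ Fintype.card F = p ^ n)
    (hcard : Fintype.card F = m * f + 1) :
    ¬ IsNontrivialDiffSet (Hset F m) := by
  classical
  rintro ⟨k, l, ⟨hk, hl⟩, hnt⟩
  set q := Fintype.card F with hqdef
  have hmf : 0 < m * f := Nat.mul_pos hm hf
  have hq2 : 2 ≤ q := by omega
  haveI : Nontrivial F := Fintype.one_lt_card_iff_nontrivial.mp (by omega)
  have hkf : k = f := by rw [← hk, hset_ncard F m f hm hcard]
  -- the Finset version of the difference set
  set D : Finset F := Finset.univ.filter (fun x => x ∈ Hset F m) with hDdef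
  have hmemD : ∀ x : F, x ∈ D ↔ x ∈ Hset F m := by
    intro x; simp [hDdef]
  have hDcard : D.card = f := by
    rw [hDdef, ← ncard_setOf_eq (fun x => x ∈ Hset F m)]
    rw [show {x : F | x ∈ Hset F m} = Hset F m from rfl]
    exact hset_ncard F m f hm hcard
  have h1D : (1 : F) ∈ Hset F m := ⟨one_ne_zero, 1, one_pow m⟩
  have hnegD : ∀ x : F, x ∈ Hset F m → -x ∈ Hset F m := by
    rintro x ⟨hx0, y, rfl⟩
    exact ⟨neg_ne_zero.mpr hx0, -y, by rw [hodd.neg_pow]⟩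
  have hD0 : ∀ x : F, x ∈ Hset F m → x ≠ 0 := fun x hx => hx.1
  -- the finset of difference pairs
  set P : F → Finset (F × F) :=
    fun a => (D ×ˢ D).filter (fun p => p.1 - p.2 = a) with hPdef
  have hPmem : ∀ a : F, ∀ p : F × F,
      p ∈ P a ↔ p.1 ∈ Hset F m ∧ p.2 ∈ Hset F m ∧ p.1 - p.2 = a := by
    intro a p
    simp only [hPdef, Finset.mem_filter, Finset.mem_product, hmemD, and_assoc]
  have hPcard : ∀ a : F, a ≠ 0 → (P a).card = l := by
    intro a ha
    rw [← hl a ha,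
      ncard_setOf_eq (fun x : F × F => x.1 ∈ Hset F m ∧ x.2 ∈ Hset F m ∧ x.1 - x.2 = a)]
    congr 1
    ext p
    rw [hPmem a p]
    simp
  have hP0card : (P 0).card = f := by
    have himg : P 0 = D.image (fun x => (x, x)) := by
      ext p
      simp only [hPdef, Finset.mem_filter, Finset.mem_product, Finset.mem_image, sub_eq_zero]
      constructor
      · rintro ⟨⟨h1, h2⟩, h3⟩
        exact ⟨p.1, h1, Prod.ext_iff.mpr ⟨rfl, h3⟩⟩
      · rintro ⟨x, hx, rfl⟩
        exact ⟨⟨hx, hx⟩, rfl⟩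
    rw [himg, Finset.card_image_of_injective _ (fun a b hab => congrArg Prod.fst hab), hDcard]
  -- the m = 1 case
  by_cases hm1 : m = 1
  · subst hm1
    have hmemD1 : ∀ x : F, x ∈ Hset F 1 ↔ x ≠ 0 := by
      intro x
      constructor
      · exact fun hx => hx.1
      · exact fun hx => ⟨hx, x, pow_one x⟩
    have hP1 : P 1 = (Finset.univ.filter (fun y : F => y ≠ 0 ∧ y ≠ -1)).image
        (fun y => (y + 1, y)) := by
      ext p
      rw [hPmem]
      simp only [Finset.mem_image, Finset.mem_filter, Finset.mem_univ, true_and, hmemD1]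
      constructor
      · rintro ⟨h1, h2, h3⟩
        refine ⟨p.2, ⟨h2, fun hy => h1 (by linear_combination h3 + hy)⟩, ?_⟩
        have hx : p.1 = p.2 + 1 := by linear_combination h3
        exact Prod.ext_iff.mpr ⟨hx.symm, rfl⟩
      · rintro ⟨y, ⟨hy0, hy1⟩, rfl⟩
        exact ⟨fun h => hy1 (by linear_combination h), hy0, by ring⟩
    have hcount : (P 1).card = q - 2 := by
      rw [hP1, Finset.card_image_of_injective _ (fun a b hab => by
        simpa using congrArg Prod.snd hab)]
      have hflt : (Finset.univ.filter (fun y : F => y ≠ 0 ∧ y ≠ -1))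
          = Finset.univ \ {0, -1} := by
        ext y
        simp [not_or]
      rw [hflt, Finset.card_sdiff_of_subset (by simp)]
      rw [Finset.card_insert_of_notMem (by
        simp only [Finset.mem_singleton]
        intro h
        exact one_ne_zero (α := F) (by linear_combination h)), Finset.card_singleton,
        Finset.card_univ, ← hqdef]
    have hl' : l = q - 2 := by rw [← hPcard 1 one_ne_zero, hcount]
    omega
  -- now m ≥ 2 (in fact ≥ 3)
  have hm2 : 2 ≤ m := by omega
  by_cases hchar2 : ringChar F = 2
  · -- characteristic 2
    haveI hCh : CharP F 2 := by rw [← hchar2]; exact ringChar.charP F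
    -- build a nontrivial additive character into ZMod 2
    letI : Module (ZMod 2) F := AddCommGroup.zmodModule (n := 2) (by
      intro x
      rw [two_nsmul]
      exact CharTwo.add_self_eq_zero x)
    let b := Module.Basis.ofVectorSpace (ZMod 2) F
    obtain ⟨i⟩ := b.index_nonempty
    set ε : F →+ ZMod 2 := (b.coord i).toAddMonoidHom with hεdef
    set w : F := b i with hwdef
    have hw : ε w = 1 := by
      simp [hεdef, hwdef, Module.Basis.coord_apply, Module.Basis.repr_self]
    -- the character sum over D
    set t : F → ℤ := fun c => ∑ x ∈ D, chi ε (c * x) with htdef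
    -- the key identity
    have hkey : ∀ c : F, c ≠ 0 → t c ^ 2 = (f : ℤ) - l := by
      intro c hc
      have e1 : t c ^ 2 = ∑ p ∈ D ×ˢ D, chi ε (c * p.1) * chi ε (c * p.2) := by
        simp only [htdef]
        rw [sq, Finset.sum_mul_sum, Finset.sum_product]
      have e2 : ∀ p : F × F, chi ε (c * p.1) * chi ε (c * p.2) = chi ε (c * (p.1 - p.2)) := by
        intro p
        rw [← chi_add, CharTwo.sub_eq_add, mul_add]
      rw [e1]
      simp only [e2]
      have e3 : ∑ p ∈ D ×ˢ D, chi ε (c * (p.1 - p.2))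
          = ∑ a : F, ∑ p ∈ (D ×ˢ D).filter (fun p => p.1 - p.2 = a), chi ε (c * (p.1 - p.2)) :=
        (Finset.sum_fiberwise_of_maps_to (fun p _ => Finset.mem_univ (p.1 - p.2)) _).symm
      have e4 : ∀ a : F, ∑ p ∈ (D ×ˢ D).filter (fun p => p.1 - p.2 = a), chi ε (c * (p.1 - p.2))
          = ((P a).card : ℤ) * chi ε (c * a) := by
        intro a
        rw [Finset.sum_congr rfl (fun p hp => by
          rw [(Finset.mem_filter.mp hp).2] : ∀ p ∈ (D ×ˢ D).filter (fun p => p.1 - p.2 = a),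
            chi ε (c * (p.1 - p.2)) = chi ε (c * a))]
        rw [Finset.sum_const, nsmul_eq_mul, hPdef]
      rw [e3]
      simp only [e4]
      rw [← Finset.add_sum_erase _ _ (Finset.mem_univ (0 : F))]
      have e5 : ∑ a ∈ Finset.univ.erase (0 : F), ((P a).card : ℤ) * chi ε (c * a)
          = l * ∑ a ∈ Finset.univ.erase (0 : F), chi ε (c * a) := by
        rw [Finset.mul_sum]
        refine Finset.sum_congr rfl (fun a ha => ?_)
        rw [hPcard a (Finset.ne_of_mem_erase ha)]
      have e6 : ∑ a ∈ Finset.univ.erase (0 : F), chi ε (c * a) = -1 := by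
        have h := chi_sum_zero ε w hw c hc
        rw [← Finset.add_sum_erase _ _ (Finset.mem_univ (0 : F))] at h
        rw [mul_zero, chi_zero] at h
        linarith
      rw [e5, e6, hP0card, mul_zero, chi_zero]
      push_cast
      ring
    -- the sum of t over nonzero c
    have hsumt : ∑ c ∈ Finset.univ.erase (0 : F), t c = -(f : ℤ) := by
      simp only [htdef]
      rw [Finset.sum_comm]
      have hinner : ∀ x ∈ D, ∑ c ∈ Finset.univ.erase (0 : F), chi ε (c * x) = -1 := by
        intro x hx
        have hx0 : x ≠ 0 := hD0 x ((hmemD x).mp hx)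
        have h2 : ∑ c : F, chi ε (c * x) = 0 := by
          rw [← chi_sum_zero ε w hw x hx0]
          exact Finset.sum_congr rfl (fun c _ => by rw [mul_comm])
        rw [← Finset.add_sum_erase _ _ (Finset.mem_univ (0 : F))] at h2
        rw [zero_mul, chi_zero] at h2
        linarith
      rw [Finset.sum_congr rfl hinner, Finset.sum_const, hDcard]
      simp
    -- counting identity : f * f = f + (m * f) * l
    have hcount : f * f = f + (m * f) * l := by
      have h1 : (D ×ˢ D).card = ∑ a : F, ((D ×ˢ D).filter (fun p => p.1 - p.2 = a)).card :=
        Finset.card_eq_sum_card_fiberwise (fun p _ => Finset.mem_univ (p.1 - p.2))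
      have h1' : f * f = ∑ a : F, (P a).card := by
        simp only [hPdef]
        rw [← h1, Finset.card_product, hDcard]
      rw [← Finset.add_sum_erase _ _ (Finset.mem_univ (0 : F))] at h1'
      have herase : ∑ a ∈ Finset.univ.erase (0 : F), (P a).card = (m * f) * l := by
        rw [Finset.sum_congr rfl (fun a ha => hPcard a (Finset.ne_of_mem_erase ha))]
        rw [Finset.sum_const, Finset.card_erase_of_mem (Finset.mem_univ _), Finset.card_univ,
          ← hqdef]
        rw [show q - 1 = m * f by omega, smul_eq_mul]
      rw [hP0card, herase] at h1'
      exact h1'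
    have hfml : f = 1 + m * l := by
      have h : f * f = f * (1 + m * l) := by rw [hcount]; ring
      exact Nat.eq_of_mul_eq_mul_left hf h
    -- endgame
    have hT := hkey 1 one_ne_zero
    have hTdvd : (t 1) ∣ (f : ℤ) := by
      have hdvd : ∀ c ∈ Finset.univ.erase (0 : F), (t 1) ∣ t c := by
        intro c hc
        have h1 : t c ^ 2 = t 1 ^ 2 := by
          rw [hkey c (Finset.ne_of_mem_erase hc), hT]
        have h2 : (t c - t 1) * (t c + t 1) = 0 := by linear_combination h1
        rcases mul_eq_zero.mp h2 with h | h
        · rw [show t c = t 1 by linarith]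
        · rw [show t c = -(t 1) by linarith]
          exact dvd_neg.mpr dvd_rfl
      have hds := Finset.dvd_sum hdvd
      rw [hsumt] at hds
      exact dvd_neg.mp hds
    have hTunit : t 1 = 1 ∨ t 1 = -1 := by
      have h1 : (t 1) ∣ (m : ℤ) * (t 1) ^ 2 := ⟨(m : ℤ) * t 1, by ring⟩
      have h2 : (m : ℤ) * (t 1) ^ 2 = ((m : ℤ) - 1) * f + 1 := by
        rw [hT]
        have hfc : (f : ℤ) = 1 + m * l := by exact_mod_cast hfml
        rw [hfc]
        ring
      have h3 : (t 1) ∣ 1 := by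
        have h4 : (t 1) ∣ ((m : ℤ) - 1) * f := Dvd.dvd.mul_left hTdvd _
        have h5 : (1 : ℤ) = (m : ℤ) * (t 1) ^ 2 - ((m : ℤ) - 1) * f := by rw [h2]; ring
        rw [h5]
        exact dvd_sub h1 h4
      exact Int.isUnit_iff.mp (isUnit_of_dvd_one h3)
    have hT1 : t 1 ^ 2 = 1 := by rcases hTunit with h | h <;> rw [h] <;> ring
    have hfl : (f : ℤ) - l ≥ 2 := by
      have hlk : l + 2 ≤ k := by omega
      rw [hkf] at hlk
      have hlk' : (l : ℤ) + 2 ≤ (f : ℤ) := by exact_mod_cast hlk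
      linarith
    rw [hT1] at hT
    linarith
  · -- odd characteristic
    have hchp : CharP F (ringChar F) := ringChar.charP F
    have hprime : (ringChar F).Prime := CharP.char_is_prime F (ringChar F)
    have h2 : (2 : F) ≠ 0 := by
      intro h
      have hdvd : ringChar F ∣ 2 :=
        (CharP.cast_eq_zero_iff F (ringChar F) 2).mp (by exact_mod_cast h)
      exact hchar2 ((Nat.prime_dvd_prime_iff_eq hprime Nat.prime_two).mp hdvd)
    -- find c outside the difference set
    have hexc : ∃ c : F, c ≠ 0 ∧ c ∉ Hset F m := by
      by_contra hcon
      push_neg at hcon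
      have hsub : Finset.univ ⊆ D ∪ {0} := by
        intro x _
        rcases eq_or_ne x 0 with rfl | hx
        · simp
        · simp only [Finset.mem_union, Finset.mem_singleton, hmemD]
          exact Or.inl (hcon x hx)
      have hcu := Finset.card_le_card hsub
      rw [Finset.card_univ, ← hqdef] at hcu
      have hle : (D ∪ {0}).card ≤ D.card + 1 :=
        le_trans (Finset.card_union_le _ _) (by simp)
      rw [hDcard] at hle
      have hq3 : q ≤ f + 1 := le_trans hcu hle
      nlinarith
    obtain ⟨c, hc0, hcD⟩ := hexc
    -- the involution (x, y) ↦ (-y, -x)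
    set τ : F × F → F × F := fun p => (-p.2, -p.1) with hτdef
    have hτmem : ∀ a : F, ∀ p ∈ P a, τ p ∈ P a := by
      intro a p hp
      rw [hPmem] at hp ⊢
      simp only [hτdef]
      exact ⟨hnegD _ hp.2.1, hnegD _ hp.1, by linear_combination hp.2.2⟩
    have hτinv : ∀ p : F × F, τ (τ p) = p := by
      intro p
      simp [hτdef]
    -- fixed-point analysis at a = 2
    have hpar1 : ((l : ℕ) : ZMod 2) = 1 := by
      have hcp := card_parity (P 2) τ (hτmem 2) (fun p _ => hτinv p)
      have hfix : (P 2).filter (fun p => τ p = p) = {((1 : F), (-1 : F))} := by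
        ext p
        simp only [Finset.mem_filter, Finset.mem_singleton]
        constructor
        · rintro ⟨hp, hfp⟩
          rw [hPmem] at hp
          simp only [hτdef, Prod.ext_iff] at hfp
          have h2x : (2 : F) * p.1 = 2 * 1 := by linear_combination hp.2.2 - hfp.1
          have hx1 : p.1 = 1 := mul_left_cancel₀ h2 h2x
          have hy1 : p.2 = -1 := by
            rw [hx1] at hfp
            linear_combination -hfp.1
          exact Prod.ext_iff.mpr ⟨hx1, hy1⟩
        · intro h
          subst h
          constructor
          · rw [hPmem]
            exact ⟨h1D, hnegD 1 h1D, by norm_num⟩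
          · simp [hτdef]
      rw [hfix, Finset.card_singleton, hPcard 2 h2] at hcp
      exact_mod_cast hcp
    -- fixed-point analysis at a = 2 * c
    have hpar0 : ((l : ℕ) : ZMod 2) = 0 := by
      have h2c : (2 : F) * c ≠ 0 := mul_ne_zero h2 hc0
      have hcp := card_parity (P (2 * c)) τ (hτmem (2 * c)) (fun p _ => hτinv p)
      have hfix : (P (2 * c)).filter (fun p => τ p = p) = ∅ := by
        ext p
        simp only [Finset.mem_filter, Finset.notMem_empty, iff_false, not_and]
        intro hp hfp
        rw [hPmem] at hp
        simp only [hτdef, Prod.ext_iff] at hfp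
        have h2x : (2 : F) * p.1 = 2 * c := by linear_combination hp.2.2 - hfp.1
        have hx1 : p.1 = c := mul_left_cancel₀ h2 h2x
        exact hcD (hx1 ▸ hp.1)
      rw [hfix, Finset.card_empty, hPcard (2 * c) h2c] at hcp
      exact_mod_cast hcp
    rw [hpar1] at hpar0
    exact absurd hpar0 (by decide)
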